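/- arXiv:quant-ph/0502155 — 2 statements merged into one kernel-verified Lean document; each statement's English description precedes it below -/
import Mathlib

section
/- Let g be a symmetric positive-definite real m×m matrix with inverse entries g^{αβ}, let F_1,…,F_m, C_0, V_1,…,V_m, Q be Hermitian n×n complex matrices, let L, R_1,…,R_k be n×n complex matrices, and let P be a positive semidefinite Hermitian n×n matrix with tr(P) = 1. Set w(u,P) := i[P, Σ_α u^α V_α] + Σ_j (R_j P R_j† − ½R_j†R_j P − ½P R_j†R_j) + (L P L† − ½L†L P − ½P L†L) and c_α := tr(P·F_α) + Re tr( i[P,V_α]·Q ). Then sup_{u∈ℝ^m} { −Re tr( w(u,P)·Q ) − Re tr( P·(½ g_{αβ}u^α u^β I + u^α F_α + C_0) ) } = ½ Σ_{α,β} g^{αβ} c_α c_β − Re tr( P·( C_0 + Σ_j (R_j†QR_j − ½R_j†R_jQ − ½QR_j†R_j) + (L†QL − ½L†LQ − ½QL†L) ) ). -/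
open Matrix
open scoped ComplexOrder

lemma quad_sup_aux {m : ℕ} (g : Matrix (Fin m) (Fin m) ℝ) (hg : g.PosDef) (c : Fin m → ℝ) (K : ℝ) :
    (⨆ u : Fin m → ℝ, (K - (∑ α, c α * u α) - (1/2 : ℝ) * ∑ α, ∑ β, g α β * u α * u β))
      = K + (1/2 : ℝ) * ∑ α, ∑ β, g⁻¹ α β * c α * c β := by
  have hdet : IsUnit g.det := isUnit_iff_ne_zero.mpr (ne_of_gt hg.det_pos)
  set u₀ : Fin m → ℝ := -(g⁻¹ *ᵥ c) with hu₀
  have hgu₀ : g *ᵥ u₀ = -c := by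
    rw [hu₀, Matrix.mulVec_neg, Matrix.mulVec_mulVec, Matrix.mul_nonsing_inv g hdet,
      Matrix.one_mulVec]
  have hgt : gᵀ = g := by
    have := hg.1
    exact (Matrix.conjTranspose_eq_transpose_of_trivial g).symm.trans this
  have hsymm : ∀ x y : Fin m → ℝ, x ⬝ᵥ (g *ᵥ y) = y ⬝ᵥ (g *ᵥ x) := by
    intro x y
    rw [Matrix.dotProduct_mulVec, ← Matrix.mulVec_transpose, hgt, dotProduct_comm]
  have hconv : ∀ u : Fin m → ℝ, u ⬝ᵥ (g *ᵥ u) = ∑ α, ∑ β, g α β * u α * u β := by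
    intro u
    simp only [dotProduct, Matrix.mulVec, dotProduct, Finset.mul_sum]
    exact Finset.sum_congr rfl fun i _ => Finset.sum_congr rfl fun j _ => by ring
  have hconv2 : c ⬝ᵥ (g⁻¹ *ᵥ c) = ∑ α, ∑ β, g⁻¹ α β * c α * c β := by
    simp only [dotProduct, Matrix.mulVec, dotProduct, Finset.mul_sum]
    exact Finset.sum_congr rfl fun i _ => Finset.sum_congr rfl fun j _ => by ring
  have hcu : ∀ u : Fin m → ℝ, c ⬝ᵥ u = ∑ α, c α * u α := fun u => rfl
  have hub : ∀ u : Fin m → ℝ,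
      K - (∑ α, c α * u α) - (1/2 : ℝ) * ∑ α, ∑ β, g α β * u α * u β
        ≤ K + (1/2 : ℝ) * ∑ α, ∑ β, g⁻¹ α β * c α * c β := by
    intro u
    have key : 0 ≤ (u - u₀) ⬝ᵥ g *ᵥ (u - u₀) := by
      have := hg.posSemidef.dotProduct_mulVec_nonneg (u - u₀); simpa using this
    have expand : (u - u₀) ⬝ᵥ g *ᵥ (u - u₀)
        = u ⬝ᵥ (g *ᵥ u) - 2*(u ⬝ᵥ (g *ᵥ u₀)) + u₀ ⬝ᵥ (g *ᵥ u₀) := by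
      rw [Matrix.mulVec_sub, dotProduct_sub, sub_dotProduct, sub_dotProduct, hsymm u₀ u]
      ring
    have e1 : u ⬝ᵥ (g *ᵥ u₀) = -(c ⬝ᵥ u) := by
      rw [hgu₀, dotProduct_neg, dotProduct_comm]
    have e2 : u₀ ⬝ᵥ (g *ᵥ u₀) = c ⬝ᵥ (g⁻¹ *ᵥ c) := by
      rw [hgu₀, dotProduct_neg, hu₀, neg_dotProduct, neg_neg, dotProduct_comm]
    rw [expand, e1, e2, hconv u, hcu u, hconv2] at key
    linarith
  have hval : K - (∑ α, c α * u₀ α) - (1/2 : ℝ) * ∑ α, ∑ β, g α β * u₀ α * u₀ β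
      = K + (1/2 : ℝ) * ∑ α, ∑ β, g⁻¹ α β * c α * c β := by
    have e1 : ∑ α, c α * u₀ α = -(c ⬝ᵥ (g⁻¹ *ᵥ c)) := by
      rw [← hcu u₀, hu₀, dotProduct_neg]
    have e2 : ∑ α, ∑ β, g α β * u₀ α * u₀ β = c ⬝ᵥ (g⁻¹ *ᵥ c) := by
      rw [← hconv u₀]
      rw [hgu₀, dotProduct_neg, hu₀, neg_dotProduct, neg_neg, dotProduct_comm]
    rw [e1, e2, hconv2]
    ring
  apply le_antisymm
  · exact ciSup_le hub
  · rw [← hval]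
    exact le_ciSup ⟨K + (1/2 : ℝ) * ∑ α, ∑ β, g⁻¹ α β * c α * c β,
      Set.forall_mem_range.mpr hub⟩ u₀

lemma diss_trace_aux {n : ℕ} (A P Q : Matrix (Fin n) (Fin n) ℂ) :
    ((A * P * Aᴴ - (1/2 : ℂ) • (Aᴴ * A * P) - (1/2 : ℂ) • (P * (Aᴴ * A))) * Q).trace
      = (P * (Aᴴ * Q * A - (1/2 : ℂ) • (Aᴴ * A * Q) - (1/2 : ℂ) • (Q * (Aᴴ * A)))).trace := by
  have e1 : (A * P * Aᴴ * Q).trace = (P * (Aᴴ * Q * A)).trace := by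
    calc (A * P * Aᴴ * Q).trace = ((A * P) * (Aᴴ * Q)).trace := by rw [mul_assoc]
    _ = ((Aᴴ * Q) * (A * P)).trace := Matrix.trace_mul_comm _ _
    _ = ((Aᴴ * Q * A) * P).trace := by rw [← mul_assoc]
    _ = (P * (Aᴴ * Q * A)).trace := Matrix.trace_mul_comm _ _
  have e2 : (Aᴴ * A * P * Q).trace = (P * (Q * (Aᴴ * A))).trace := by
    calc (Aᴴ * A * P * Q).trace = ((Aᴴ * A) * (P * Q)).trace := by rw [mul_assoc]
    _ = ((P * Q) * (Aᴴ * A)).trace := Matrix.trace_mul_comm _ _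
    _ = (P * (Q * (Aᴴ * A))).trace := by rw [mul_assoc]
  have e3 : ((P * (Aᴴ * A)) * Q).trace = (P * (Aᴴ * A * Q)).trace := by
    rw [mul_assoc]
  simp only [Matrix.sub_mul, smul_mul_assoc, Matrix.mul_sub, mul_smul_comm, trace_sub, trace_smul]
  rw [e1, e2, e3]
  ring

lemma ctrl_trace_aux {m n : ℕ} (V : Fin m → Matrix (Fin n) (Fin n) ℂ)
    (P Q : Matrix (Fin n) (Fin n) ℂ) (u : Fin m → ℝ) :
    ((Complex.I • (P * (∑ α, ((u α : ℂ) • V α)) - (∑ α, ((u α : ℂ) • V α)) * P)) * Q).trace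
      = ∑ α, (u α : ℂ) * ((Complex.I • (P * V α - V α * P)) * Q).trace := by
  simp only [Matrix.mul_sum, Matrix.sum_mul, smul_mul_assoc, mul_smul_comm,
    Matrix.sub_mul, trace_sub, trace_smul, trace_sum, smul_eq_mul,
    ← Finset.sum_sub_distrib, Finset.mul_sum]
  exact Finset.sum_congr rfl fun i _ => by ring

/-- For linear-state cost `C(u) = ½g_{αβ}u^αu^β I + u^αF_α + C₀` and control Hamiltonian
`H(u) = u^αV_α`, the Pontryagin super-Hamiltonian of the Itô drift `w` evaluates to
`𝓗_w(P,Q) = ½ g^{αβ} c_α c_β − Re tr(P(C₀ + 𝓛_R(Q) + 𝓛_L(Q)))` with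
`c_α = tr(P F_α) + Re tr(i[P,V_α] Q)`. -/
theorem super_hamiltonian_linear_state_cost
    (m n k : ℕ) (g : Matrix (Fin m) (Fin m) ℝ) (hg : g.PosDef)
    (F : Fin m → Matrix (Fin n) (Fin n) ℂ) (hF : ∀ α, (F α).IsHermitian)
    (C₀ : Matrix (Fin n) (Fin n) ℂ) (hC₀ : C₀.IsHermitian)
    (V : Fin m → Matrix (Fin n) (Fin n) ℂ) (hV : ∀ α, (V α).IsHermitian)
    (Q : Matrix (Fin n) (Fin n) ℂ) (hQ : Q.IsHermitian)
    (L : Matrix (Fin n) (Fin n) ℂ) (R : Fin k → Matrix (Fin n) (Fin n) ℂ)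
    (P : Matrix (Fin n) (Fin n) ℂ) (hP : P.PosSemidef) (hP1 : P.trace = 1)
    (w : (Fin m → ℝ) → Matrix (Fin n) (Fin n) ℂ)
    (hw : ∀ u, w u =
      Complex.I • (P * (∑ α, ((u α : ℂ) • V α)) - (∑ α, ((u α : ℂ) • V α)) * P)
        + (∑ j, (R j * P * (R j)ᴴ
            - (1 / 2 : ℂ) • ((R j)ᴴ * R j * P) - (1 / 2 : ℂ) • (P * ((R j)ᴴ * R j))))
        + (L * P * Lᴴ - (1 / 2 : ℂ) • (Lᴴ * L * P) - (1 / 2 : ℂ) • (P * (Lᴴ * L))))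
    (c : Fin m → ℝ)
    (hc : ∀ α, c α = ((P * F α).trace).re
        + (((Complex.I • (P * V α - V α * P)) * Q).trace).re) :
    (⨆ u : Fin m → ℝ,
        (-(((w u) * Q).trace).re
          - ((P * ((((1 / 2 : ℝ) * ∑ α, ∑ β, g α β * u α * u β : ℝ) : ℂ)
                • (1 : Matrix (Fin n) (Fin n) ℂ)
              + ∑ α, ((u α : ℂ) • F α) + C₀)).trace).re))
      = (1 / 2 : ℝ) * (∑ α, ∑ β, g⁻¹ α β * c α * c β)
        - ((P * (C₀
            + (∑ j, ((R j)ᴴ * Q * R j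
                - (1 / 2 : ℂ) • ((R j)ᴴ * R j * Q) - (1 / 2 : ℂ) • (Q * ((R j)ᴴ * R j))))
            + (Lᴴ * Q * L
                - (1 / 2 : ℂ) • (Lᴴ * L * Q) - (1 / 2 : ℂ) • (Q * (Lᴴ * L))))).trace).re := by
  set SjQ : Matrix (Fin n) (Fin n) ℂ :=
    ∑ j, ((R j)ᴴ * Q * R j
      - (1 / 2 : ℂ) • ((R j)ᴴ * R j * Q) - (1 / 2 : ℂ) • (Q * ((R j)ᴴ * R j))) with hSjQ
  set LpQ : Matrix (Fin n) (Fin n) ℂ :=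
    Lᴴ * Q * L - (1 / 2 : ℂ) • (Lᴴ * L * Q) - (1 / 2 : ℂ) • (Q * (Lᴴ * L)) with hLpQ
  set K : ℝ := -((P * (C₀ + SjQ + LpQ)).trace).re with hK
  have hwQ : ∀ u, ((w u) * Q).trace
      = (∑ α, (u α : ℂ) * ((Complex.I • (P * V α - V α * P)) * Q).trace)
        + ((P * SjQ).trace + (P * LpQ).trace) := by
    intro u
    rw [hw u]
    have hjj : ((∑ j, (R j * P * (R j)ᴴ
        - (1 / 2 : ℂ) • ((R j)ᴴ * R j * P) - (1 / 2 : ℂ) • (P * ((R j)ᴴ * R j)))) * Q).trace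
        = (P * SjQ).trace := by
      rw [Matrix.sum_mul, trace_sum, hSjQ, Matrix.mul_sum, trace_sum]
      exact Finset.sum_congr rfl fun j _ => diss_trace_aux (R j) P Q
    rw [Matrix.add_mul, Matrix.add_mul, trace_add, trace_add,
      ctrl_trace_aux V P Q u, diss_trace_aux L P Q, hjj, ← hLpQ]
    ring
  have hCQ : ∀ u : Fin m → ℝ, (P * ((((1 / 2 : ℝ) * ∑ α, ∑ β, g α β * u α * u β : ℝ) : ℂ)
        • (1 : Matrix (Fin n) (Fin n) ℂ)
      + ∑ α, ((u α : ℂ) • F α) + C₀)).trace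
      = (((1 / 2 : ℝ) * ∑ α, ∑ β, g α β * u α * u β : ℝ) : ℂ)
        + (∑ α, (u α : ℂ) * (P * F α).trace) + (P * C₀).trace := by
    intro u
    simp only [Matrix.mul_add, trace_add, Matrix.mul_sum, mul_smul_comm, trace_smul,
      trace_sum, Matrix.mul_one, hP1, smul_eq_mul, mul_one]
  have hKdist : K = -((P * C₀).trace).re - ((P * SjQ).trace).re - ((P * LpQ).trace).re := by
    rw [hK, Matrix.mul_add, Matrix.mul_add, trace_add, trace_add, Complex.add_re,
      Complex.add_re]
    ring
  have hpt : ∀ u : Fin m → ℝ,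
      (-(((w u) * Q).trace).re
          - ((P * ((((1 / 2 : ℝ) * ∑ α, ∑ β, g α β * u α * u β : ℝ) : ℂ)
                • (1 : Matrix (Fin n) (Fin n) ℂ)
              + ∑ α, ((u α : ℂ) • F α) + C₀)).trace).re)
        = K - (∑ α, c α * u α) - (1/2 : ℝ) * ∑ α, ∑ β, g α β * u α * u β := by
    intro u
    rw [hwQ u, hCQ u, hKdist]
    simp only [Complex.add_re, Complex.re_sum, Complex.re_ofReal_mul, Complex.ofReal_re]
    have hcsum : ∑ α, c α * u α
        = (∑ α, u α * (((Complex.I • (P * V α - V α * P)) * Q).trace).re)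
          + ∑ α, u α * ((P * F α).trace).re := by
      rw [← Finset.sum_add_distrib]
      exact Finset.sum_congr rfl fun α _ => by rw [hc α]; ring
    rw [hcsum]
    ring
  calc (⨆ u : Fin m → ℝ,
        (-(((w u) * Q).trace).re
          - ((P * ((((1 / 2 : ℝ) * ∑ α, ∑ β, g α β * u α * u β : ℝ) : ℂ)
                • (1 : Matrix (Fin n) (Fin n) ℂ)
              + ∑ α, ((u α : ℂ) • F α) + C₀)).trace).re))
      = ⨆ u : Fin m → ℝ, (K - (∑ α, c α * u α)
          - (1/2 : ℝ) * ∑ α, ∑ β, g α β * u α * u β) := iSup_congr hpt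
    _ = K + (1/2 : ℝ) * ∑ α, ∑ β, g⁻¹ α β * c α * c β := quad_sup_aux g hg c K
    _ = (1 / 2 : ℝ) * (∑ α, ∑ β, g⁻¹ α β * c α * c β)
        - ((P * (C₀ + SjQ + LpQ)).trace).re := by rw [hK]; ring
end

section
/- Let κ ∈ ℝ, let f : ℝ³ → ℝ be twice Fréchet differentiable, let p = (x,y,z) ∈ ℝ³, and define F on 2×2 complex matrices by F(τ) := f( Re tr(τ ς_x), Re tr(τ ς_y), Re tr(τ ς_z) ). Set ρ := ½(I + p·ς), L := ½κ ς_z and σ(ρ) := Lρ + ρL† − tr(ρ(L+L†))ρ. Then F is twice Fréchet differentiable and ½·D²F(ρ)[σ(ρ), σ(ρ)] = (κ²/2)·aᵀ (Hess f)(p) a, where a := (−zx, −zy, 1−z²) ∈ ℝ³; explicitly this equals (κ²/2)( x²z² f_xx + y²z² f_yy + (1−z²)² f_zz + 2xyz² f_xy − 2xz(1−z²) f_xz − 2yz(1−z²) f_yz ) evaluated at p. -/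
open Matrix

attribute [local instance] Matrix.frobeniusNormedAddCommGroup Matrix.frobeniusNormedSpace

/-- The Pauli matrix `ς_x`. -/
noncomputable def pauliX : Matrix (Fin 2) (Fin 2) ℂ := !![0, 1; 1, 0]
/-- The Pauli matrix `ς_y`. -/
noncomputable def pauliY : Matrix (Fin 2) (Fin 2) ℂ := !![0, -Complex.I; Complex.I, 0]
/-- The Pauli matrix `ς_z`. -/
noncomputable def pauliZ : Matrix (Fin 2) (Fin 2) ℂ := !![1, 0; 0, -1]

noncomputable def blochLM : Matrix (Fin 2) (Fin 2) ℂ →ₗ[ℝ] (Fin 3 → ℝ) where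
  toFun τ := ![((τ * pauliX).trace).re, ((τ * pauliY).trace).re, ((τ * pauliZ).trace).re]
  map_add' τ τ' := by
    funext i; fin_cases i <;> simp [add_mul, Matrix.trace_add]
  map_smul' c τ := by
    funext i; fin_cases i <;> simp [smul_mul_assoc, Matrix.trace_smul, Complex.smul_re]

noncomputable def blochCLM : Matrix (Fin 2) (Fin 2) ℂ →L[ℝ] (Fin 3 → ℝ) :=
  LinearMap.toContinuousLinearMap blochLM

lemma blochCLM_apply (τ : Matrix (Fin 2) (Fin 2) ℂ) :
    blochCLM τ = ![((τ * pauliX).trace).re, ((τ * pauliY).trace).re, ((τ * pauliZ).trace).re] := rfl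

lemma trace_mul_pauliX (m : Matrix (Fin 2) (Fin 2) ℂ) : (m * pauliX).trace = m 0 1 + m 1 0 := by
  simp [pauliX, Matrix.trace_fin_two, Matrix.mul_apply, Fin.sum_univ_two]
lemma trace_mul_pauliY (m : Matrix (Fin 2) (Fin 2) ℂ) :
    (m * pauliY).trace = (m 0 1 - m 1 0) * Complex.I := by
  simp [pauliY, Matrix.trace_fin_two, Matrix.mul_apply, Fin.sum_univ_two]; ring
lemma trace_mul_pauliZ (m : Matrix (Fin 2) (Fin 2) ℂ) : (m * pauliZ).trace = m 0 0 - m 1 1 := by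
  simp [pauliZ, Matrix.trace_fin_two, Matrix.mul_apply, Fin.sum_univ_two]; ring

lemma blochCLM_comp_apply (D : (Fin 3 → ℝ) →L[ℝ] (Fin 3 → ℝ) →L[ℝ] ℝ)
    (m : Matrix (Fin 2) (Fin 2) ℂ) :
    ((((ContinuousLinearMap.compL ℝ (Matrix (Fin 2) (Fin 2) ℂ) (Fin 3 → ℝ) ℝ).flip
        blochCLM)).comp (D.comp blochCLM)) m m = D (blochCLM m) (blochCLM m) := rfl

lemma bloch_of_matrix (x y z r : ℝ) (w : ℂ) (m : Matrix (Fin 2) (Fin 2) ℂ)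
    (hm : m = (r : ℂ) • !![w + (z:ℂ), (x:ℂ) - Complex.I * y; (x:ℂ) + Complex.I * y, w - (z:ℂ)]) :
    blochCLM m = ![2 * r * x, 2 * r * y, 2 * r * z] := by
  have h01 : m 0 1 = (r:ℂ) * ((x:ℂ) - Complex.I * y) := by rw [hm]; simp
  have h10 : m 1 0 = (r:ℂ) * ((x:ℂ) + Complex.I * y) := by rw [hm]; simp
  have h00 : m 0 0 = (r:ℂ) * (w + (z:ℂ)) := by rw [hm]; simp
  have h11 : m 1 1 = (r:ℂ) * (w - (z:ℂ)) := by rw [hm]; simp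
  funext i
  fin_cases i <;>
    · show _ = _
      rw [blochCLM_apply]
      simp only [Matrix.cons_val_zero, Matrix.cons_val_one, Matrix.head_cons,
        trace_mul_pauliX, trace_mul_pauliY, trace_mul_pauliZ, h01, h10, h00, h11,
        Matrix.cons_val_fin_one, Matrix.cons_val']
      simp [Complex.mul_re, Complex.add_re, Complex.sub_re, Complex.mul_im, Complex.add_im,
        Complex.sub_im]
      ring

set_option maxHeartbeats 1000000 in
/-- In Bloch coordinates, the Itô correction term `½⟨σ(ρ)⊗σ(ρ),(δ⊗δ)F⟩ = ½D²F(ρ)[σ(ρ),σ(ρ)]`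
of the diffusive Bellman equation for `F(τ) = f(Re tr(τς_x), Re tr(τς_y), Re tr(τς_z))`,
state `ρ = ½(I + p·ς)` and measurement coupling `L = ½κς_z` equals
`(κ²/2)·aᵀ(Hess f)(p)a` with `a = (−zx, −zy, 1−z²)`, i.e.
`(κ²/2)(x²z²f_xx + y²z²f_yy + (1−z²)²f_zz + 2xyz²f_xy − 2xz(1−z²)f_xz − 2yz(1−z²)f_yz)`. -/
theorem qubit_ito_correction_bloch (κ : ℝ) (f : (Fin 3 → ℝ) → ℝ)
    (hf : Differentiable ℝ f ∧ Differentiable ℝ (fderiv ℝ f)) (p : Fin 3 → ℝ) :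
    let F : Matrix (Fin 2) (Fin 2) ℂ → ℝ := fun τ =>
      f ![((τ * pauliX).trace).re, ((τ * pauliY).trace).re, ((τ * pauliZ).trace).re]
    let ρ : Matrix (Fin 2) (Fin 2) ℂ :=
      (1 / 2 : ℂ) • ((1 : Matrix (Fin 2) (Fin 2) ℂ)
        + (p 0 : ℂ) • pauliX + (p 1 : ℂ) • pauliY + (p 2 : ℂ) • pauliZ)
    let L : Matrix (Fin 2) (Fin 2) ℂ := ((1 / 2 : ℝ) * κ : ℂ) • pauliZ
    let σρ : Matrix (Fin 2) (Fin 2) ℂ := L * ρ + ρ * Lᴴ - (ρ * (L + Lᴴ)).trace • ρ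
    let a : Fin 3 → ℝ := ![-(p 2 * p 0), -(p 2 * p 1), 1 - p 2 ^ 2]
    let hess : Fin 3 → Fin 3 → ℝ := fun i j =>
      fderiv ℝ (fderiv ℝ f) p (Pi.single i 1) (Pi.single j 1)
    (Differentiable ℝ F ∧ Differentiable ℝ (fderiv ℝ F)) ∧
    (1 / 2 : ℝ) * fderiv ℝ (fderiv ℝ F) ρ σρ σρ
        = κ ^ 2 / 2 * fderiv ℝ (fderiv ℝ f) p a a ∧
    κ ^ 2 / 2 * fderiv ℝ (fderiv ℝ f) p a a
        = κ ^ 2 / 2 * ((p 0) ^ 2 * (p 2) ^ 2 * hess 0 0 + (p 1) ^ 2 * (p 2) ^ 2 * hess 1 1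
            + (1 - (p 2) ^ 2) ^ 2 * hess 2 2
            + 2 * (p 0) * (p 1) * (p 2) ^ 2 * hess 0 1
            - 2 * (p 0) * (p 2) * (1 - (p 2) ^ 2) * hess 0 2
            - 2 * (p 1) * (p 2) * (1 - (p 2) ^ 2) * hess 1 2) := by
  intro F ρ L σρ a hess
  have hFeq : F = f ∘ blochCLM := rfl
  have hBdiff : Differentiable ℝ (blochCLM : Matrix (Fin 2) (Fin 2) ℂ → Fin 3 → ℝ) :=
    blochCLM.differentiable
  have hDF : Differentiable ℝ F := by
    rw [hFeq]; exact hf.1.comp hBdiff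
  set C : ((Fin 3 → ℝ) →L[ℝ] ℝ) →L[ℝ] (Matrix (Fin 2) (Fin 2) ℂ →L[ℝ] ℝ) :=
    (ContinuousLinearMap.compL ℝ (Matrix (Fin 2) (Fin 2) ℂ) (Fin 3 → ℝ) ℝ).flip blochCLM with hC
  have hfd1 : ∀ τ, fderiv ℝ F τ = C (fderiv ℝ f (blochCLM τ)) := by
    intro τ
    rw [hFeq]
    exact ((hf.1 _).hasFDerivAt.comp τ blochCLM.hasFDerivAt).fderiv
  have hfd1' : fderiv ℝ F = fun τ => C (fderiv ℝ f (blochCLM τ)) := funext hfd1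
  have hD2 : ∀ τ, HasFDerivAt (fderiv ℝ F)
      (C.comp ((fderiv ℝ (fderiv ℝ f) (blochCLM τ)).comp blochCLM)) τ := by
    intro τ
    rw [hfd1']
    have h1 := ((hf.2 (blochCLM τ)).hasFDerivAt).comp τ blochCLM.hasFDerivAt
    have h2 := h1.clm_comp (hasFDerivAt_const (blochCLM : Matrix (Fin 2) (Fin 2) ℂ →L[ℝ] (Fin 3 → ℝ)) τ)
    refine h2.congr_fderiv ?_
    ext M v
    rw [ContinuousLinearMap.add_apply, ContinuousLinearMap.add_apply]
    refine (congrArg (· + _) ?_).trans (zero_add _)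
    show (fderiv ℝ f (blochCLM τ)) 0 = 0
    exact map_zero _
  have hDF2 : Differentiable ℝ (fderiv ℝ F) := fun τ => (hD2 τ).differentiableAt
  refine ⟨⟨hDF, hDF2⟩, ?_, ?_⟩
  · have hBρ : blochCLM ρ = p := by
      have h := bloch_of_matrix (p 0) (p 1) (p 2) (1/2) 1 ρ ?_
      · rw [h]; funext i; fin_cases i <;> norm_num <;> try rfl
      · show (1 / 2 : ℂ) • _ = _
        ext i j
        fin_cases i <;> fin_cases j <;>
          · simp [pauliX, pauliY, pauliZ, Matrix.one_apply]
            try push_cast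
            try ring
    have hBσ : blochCLM σρ = κ • a := by
      have hρ' : ρ = ((1/2 : ℝ) : ℂ) • !![1 + (p 2 : ℂ), (p 0 : ℂ) - Complex.I * (p 1);
          (p 0 : ℂ) + Complex.I * (p 1), 1 - (p 2 : ℂ)] := by
        show (1 / 2 : ℂ) • _ = _
        ext i j
        fin_cases i <;> fin_cases j <;>
          · simp [pauliX, pauliY, pauliZ, Matrix.one_apply]
            try push_cast
            try ring
      have hLH : Lᴴ = L := by
        show Lᴴ = L
        ext i j
        fin_cases i <;> fin_cases j <;> simp [L, pauliZ, Matrix.conjTranspose_apply]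
      have htr : (ρ * (L + Lᴴ)).trace = (κ : ℂ) * (p 2) := by
        rw [hLH, hρ']
        simp [L, pauliZ, Matrix.trace_fin_two, Matrix.mul_apply, Fin.sum_univ_two]
        ring
      have hσ : σρ = ((κ/2 : ℝ) : ℂ) • !![(0:ℂ) + ((1 - p 2 ^2 : ℝ) : ℂ),
          ((-(p 2 * p 0) : ℝ) :ℂ) - Complex.I * ((-(p 2 * p 1) : ℝ) : ℂ);
          ((-(p 2 * p 0) : ℝ) :ℂ) + Complex.I * ((-(p 2 * p 1) : ℝ) : ℂ),
          (0:ℂ) - ((1 - p 2 ^2 : ℝ) : ℂ)] := by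
        show L * ρ + ρ * Lᴴ - (ρ * (L + Lᴴ)).trace • ρ = _
        rw [htr, hLH, hρ']
        ext i j
        fin_cases i <;> fin_cases j <;>
          · simp [L, pauliZ, Matrix.mul_apply, Fin.sum_univ_two]
            push_cast
            ring
      have h := bloch_of_matrix (-(p 2 * p 0)) (-(p 2 * p 1)) (1 - p 2 ^ 2) (κ/2) 0 σρ hσ
      rw [h]
      funext i
      fin_cases i <;>
        simp only [Fin.zero_eta, Fin.mk_one, Fin.reduceFinMk, Matrix.cons_val_zero,
          Matrix.cons_val_one, Matrix.head_cons, Matrix.cons_val_two, Matrix.tail_cons,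
          Pi.smul_apply, smul_eq_mul, a,
          Matrix.cons_val', Matrix.cons_val_fin_one, Matrix.empty_val'] <;> ring
    have key : fderiv ℝ (fderiv ℝ F) ρ σρ σρ
        = fderiv ℝ (fderiv ℝ f) p (κ • a) (κ • a) := by
      rw [(hD2 ρ).fderiv, hBρ]
      rw [hC]
      show (fderiv ℝ (fderiv ℝ f) p) (blochCLM σρ) (blochCLM σρ) = _
      rw [hBσ]
    rw [key]
    simp only [_root_.map_smul, ContinuousLinearMap.smul_apply, smul_eq_mul]
    ring
  · have ha : a = a 0 • (@Pi.single (Fin 3) (fun _ => ℝ) _ _ 0 1)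
        + a 1 • (@Pi.single (Fin 3) (fun _ => ℝ) _ _ 1 1)
        + a 2 • (@Pi.single (Fin 3) (fun _ => ℝ) _ _ 2 1) := by
      funext j
      fin_cases j <;> simp [a]
    have hsymm : ∀ v w, fderiv ℝ (fderiv ℝ f) p v w = fderiv ℝ (fderiv ℝ f) p w v :=
      fun v w => second_derivative_symmetric (fun y => (hf.1 y).hasFDerivAt)
        ((hf.2 p).hasFDerivAt) v w
    have h10 : fderiv ℝ (fderiv ℝ f) p (Pi.single (1:Fin 3) (1:ℝ)) (Pi.single 0 1)
        = fderiv ℝ (fderiv ℝ f) p (Pi.single 0 1) (Pi.single 1 1) := hsymm _ _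
    have h20 : fderiv ℝ (fderiv ℝ f) p (Pi.single (2:Fin 3) (1:ℝ)) (Pi.single 0 1)
        = fderiv ℝ (fderiv ℝ f) p (Pi.single 0 1) (Pi.single 2 1) := hsymm _ _
    have h21 : fderiv ℝ (fderiv ℝ f) p (Pi.single (2:Fin 3) (1:ℝ)) (Pi.single 1 1)
        = fderiv ℝ (fderiv ℝ f) p (Pi.single 1 1) (Pi.single 2 1) := hsymm _ _
    conv_lhs => rw [ha]
    simp only [_root_.map_add, _root_.map_smul, ContinuousLinearMap.add_apply, ContinuousLinearMap.smul_apply,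
      ContinuousLinearMap.coe_smul', Pi.smul_apply, smul_eq_mul]
    rw [h10, h20, h21]
    simp only [hess, a, Matrix.cons_val_zero, Matrix.cons_val_one, Matrix.head_cons,
      Matrix.cons_val_two, Matrix.tail_cons]
    ring
end
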